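/- The Fourier series of f diverges at x = 0: the sequence of Fourier partial sums (S_N(f)(0))_{N≥0} does not converge as N → ∞ (in particular it does not converge to f(0) = 0). -/

import Mathlib

open Finset Real Filter

/-- The trigonometric polynomial `T_{p,q}(x) = Σ_{m=1}^p cos((q−m)x)/m − Σ_{m=1}^p cos((q+m)x)/m`. -/
noncomputable def T (p q : ℕ) (x : ℝ) : ℝ :=
  (∑ m ∈ Finset.Icc 1 p, Real.cos (((q : ℝ) - (m : ℝ)) * x) / (m : ℝ))
    - ∑ m ∈ Finset.Icc 1 p, Real.cos (((q : ℝ) + (m : ℝ)) * x) / (m : ℝ)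

/-- Fourier cosine coefficient `a_n(g) = (1/π) ∫_{-π}^{π} g(t) cos(nt) dt`. -/
noncomputable def fourierA (g : ℝ → ℝ) (n : ℕ) : ℝ :=
  (1 / Real.pi) * ∫ t in (-Real.pi)..Real.pi, g t * Real.cos ((n : ℝ) * t)

/-- Fourier sine coefficient `b_n(g) = (1/π) ∫_{-π}^{π} g(t) sin(nt) dt`. -/
noncomputable def fourierB (g : ℝ → ℝ) (n : ℕ) : ℝ :=
  (1 / Real.pi) * ∫ t in (-Real.pi)..Real.pi, g t * Real.sin ((n : ℝ) * t)

/-- Fourier partial sum `S_N(g)(x) = a_0(g)/2 + Σ_{n=1}^N (a_n(g) cos(nx) + b_n(g) sin(nx))`. -/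
noncomputable def fourierPartialSum (g : ℝ → ℝ) (N : ℕ) (x : ℝ) : ℝ :=
  fourierA g 0 / 2 +
    ∑ n ∈ Finset.Icc 1 N, (fourierA g n * Real.cos ((n : ℝ) * x)
      + fourierB g n * Real.sin ((n : ℝ) * x))

open MeasureTheory

noncomputable def sinPart (n : ℕ) (x : ℝ) : ℝ := ∑ m ∈ Icc 1 n, Real.sin (m * x)
noncomputable def sinSum (p : ℕ) (x : ℝ) : ℝ := ∑ m ∈ Icc 1 p, Real.sin (m * x) / m

lemma sinPart_succ (n : ℕ) (x : ℝ) :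
    sinPart (n+1) x = sinPart n x + Real.sin (((n:ℝ)+1) * x) := by
  unfold sinPart
  rw [Finset.sum_Icc_succ_top (by omega)]
  push_cast; ring

lemma sinPart_id (n : ℕ) (x : ℝ) :
    2 * Real.sin (x/2) * sinPart n x = Real.cos (x/2) - Real.cos (((n:ℝ) + 1/2) * x) := by
  induction n with
  | zero => simp [sinPart]; ring_nf
  | succ n ih =>
    rw [sinPart_succ, mul_add, ih]
    have h : Real.cos (((n:ℝ)+1/2)*x) - Real.cos (((n:ℝ)+1+1/2)*x)
        = 2 * Real.sin (x/2) * Real.sin (((n:ℝ)+1)*x) := by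
      rw [Real.cos_sub_cos,
        show (((n:ℝ)+1/2)*x + ((n:ℝ)+1+1/2)*x)/2 = ((n:ℝ)+1)*x by ring,
        show (((n:ℝ)+1/2)*x - ((n:ℝ)+1+1/2)*x)/2 = -(x/2) by ring, Real.sin_neg]
      ring
    push_cast
    linarith [h]

lemma sinPart_bound {x : ℝ} (hx : 0 < x) (hx2 : x ≤ π) (n : ℕ) : |sinPart n x| ≤ π / x := by
  have hπ := Real.pi_pos
  have hs : x / π ≤ Real.sin (x/2) := by
    have := Real.mul_le_sin (x := x/2) (by linarith) (by linarith)
    calc x / π = 2/π * (x/2) := by field_simp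
    _ ≤ _ := this
  have hspos : 0 < Real.sin (x/2) := lt_of_lt_of_le (by positivity) hs
  have hid := sinPart_id n x
  have h2 : |2 * Real.sin (x/2) * sinPart n x| ≤ 2 := by
    rw [hid]
    have := Real.neg_one_le_cos (x/2)
    have := Real.cos_le_one (x/2)
    have := Real.neg_one_le_cos (((n:ℝ)+1/2)*x)
    have := Real.cos_le_one (((n:ℝ)+1/2)*x)
    rw [abs_le]; constructor <;> linarith
  rw [abs_mul, abs_of_pos (by positivity : (0:ℝ) < 2 * Real.sin (x/2))] at h2
  have h3 : |sinPart n x| ≤ 1 / Real.sin (x/2) := by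
    rw [le_div_iff₀ hspos]; linarith
  calc |sinPart n x| ≤ 1 / Real.sin (x/2) := h3
  _ ≤ 1 / (x/π) := by
      apply one_div_le_one_div_of_le (by positivity) hs
  _ = π / x := by field_simp

lemma tele (a : ℕ) : ∀ p, a ≤ p →
    ∑ m ∈ Icc (a+1) p, ((1:ℝ)/(m:ℝ) - 1/((m:ℝ)+1)) = 1/((a:ℝ)+1) - 1/((p:ℝ)+1) := by
  intro p
  induction p with
  | zero => intro h; interval_cases a; simp
  | succ n ih =>
    intro h
    rcases Nat.lt_or_ge a (n+1) with h1 | h1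
    · have ha : a ≤ n := by omega
      rw [Finset.sum_Icc_succ_top (by omega), ih ha]
      push_cast; ring
    · have : a = n + 1 := by omega
      subst this
      simp
  
lemma abel_id (D : ℕ → ℝ) (b : ℕ → ℝ) (a : ℕ) : ∀ p, a + 1 ≤ p →
    ∑ m ∈ Icc (a+1) p, (D m - D (m-1)) * b m
      = D p * b p - D a * b (a+1) + ∑ m ∈ Icc (a+1) (p-1), D m * (b m - b (m+1)) := by
  intro p
  induction p with
  | zero => omega
  | succ n ih =>
    intro h
    rcases Nat.lt_or_ge a n with h1 | h1
    · have hn : a + 1 ≤ n := by omega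
      rw [Finset.sum_Icc_succ_top (by omega), ih hn]
      have h2 : n + 1 - 1 = n := by omega
      rw [h2]
      have h3 : n = (n-1) + 1 := by omega
      rw [show Icc (a+1) n = Icc (a+1) ((n-1)+1) by rw [← h3]]
      rw [Finset.sum_Icc_succ_top (by omega), ← h3]
      ring
    · have : a = n := by omega
      subst this
      simp only [Nat.add_sub_cancel]
      rw [Finset.Icc_self, Finset.sum_singleton]
      simp
      ring

lemma abel_bound (D : ℕ → ℝ) (M : ℝ) (hD : ∀ n, |D n| ≤ M) (a p : ℕ) :
    |∑ m ∈ Icc (a+1) p, (D m - D (m-1)) / (m:ℝ)| ≤ 2 * M / ((a:ℝ)+1) := by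
  have hM : 0 ≤ M := le_trans (abs_nonneg _) (hD 0)
  rcases Nat.lt_or_ge p (a+1) with h | h
  · rw [Finset.Icc_eq_empty (by omega)]
    simp; positivity
  · have hid := abel_id D (fun m => 1/(m:ℝ)) a p h
    push_cast at hid
    have hp : (0:ℝ) < (p:ℝ) := by
      have : 0 < p := by omega
      exact_mod_cast this
    have ha1 : (0:ℝ) < (a:ℝ)+1 := by positivity
    have htel := tele a (p-1) (by omega)
    have hcast : ((p-1:ℕ):ℝ) + 1 = (p:ℝ) := by
      have h1 : 1 ≤ p := by omega
      push_cast [h1]; ring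
    rw [hcast] at htel
    set S := ∑ m ∈ Icc (a+1) (p-1), D m * (1/(m:ℝ) - 1/((m:ℝ)+1)) with hS
    have hsum' : |S| ≤ M * (1/((a:ℝ)+1) - 1/(p:ℝ)) := by
      calc |S| ≤ ∑ m ∈ Icc (a+1) (p-1), |D m * (1/(m:ℝ) - 1/((m:ℝ)+1))| :=
            Finset.abs_sum_le_sum_abs _ _
      _ ≤ ∑ m ∈ Icc (a+1) (p-1), M * (1/(m:ℝ) - 1/((m:ℝ)+1)) := by
          apply Finset.sum_le_sum
          intro m hm
          have hm1 : 1 ≤ m := by simp at hm; omega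
          have hmr : (0:ℝ) < (m:ℝ) := by exact_mod_cast hm1
          have hc : (0:ℝ) ≤ 1/(m:ℝ) - 1/((m:ℝ)+1) := by
            have : 1/((m:ℝ)+1) ≤ 1/(m:ℝ) := one_div_le_one_div_of_le hmr (by linarith)
            linarith
          rw [abs_mul, abs_of_nonneg hc]
          exact mul_le_mul_of_nonneg_right (hD m) hc
      _ = M * (1/((a:ℝ)+1) - 1/(p:ℝ)) := by rw [← Finset.mul_sum, htel]
    have hid' : ∑ m ∈ Icc (a+1) p, (D m - D (m-1)) / (m:ℝ)
        = D p * (1/(p:ℝ)) + (-(D a * (1/((a:ℝ)+1)))) + S := by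
      rw [show ∀ y:ℝ, D p * (1/(p:ℝ)) + (-(D a * (1/((a:ℝ)+1)))) + y
            = D p * (1/(p:ℝ)) - D a * (1/((a:ℝ)+1)) + y from fun y => by ring]
      rw [← hid]
      apply Finset.sum_congr rfl
      intro m hm
      rw [div_eq_mul_inv, one_div]
    rw [hid']
    have e1 : |D p * (1/(p:ℝ))| ≤ M * (1/(p:ℝ)) := by
      rw [abs_mul, abs_of_nonneg (by positivity : (0:ℝ) ≤ 1/(p:ℝ))]
      exact mul_le_mul_of_nonneg_right (hD p) (by positivity)
    have e2 : |-(D a * (1/((a:ℝ)+1)))| ≤ M * (1/((a:ℝ)+1)) := by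
      rw [abs_neg, abs_mul, abs_of_nonneg (by positivity : (0:ℝ) ≤ 1/((a:ℝ)+1))]
      exact mul_le_mul_of_nonneg_right (hD a) (by positivity)
    have tri := abs_add_three (D p * (1/(p:ℝ))) (-(D a * (1/((a:ℝ)+1)))) S
    have goal_eq : 2 * M / ((a:ℝ)+1)
        = M * (1/(p:ℝ)) + M * (1/((a:ℝ)+1)) + M * (1/((a:ℝ)+1) - 1/(p:ℝ)) := by ring
    rw [goal_eq]
    linarith

lemma abs_sin_le {t : ℝ} (ht : 0 ≤ t) : |Real.sin t| ≤ t := by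
  rw [abs_le]
  constructor
  · rcases le_or_gt t 1 with h | h
    · have : 0 ≤ Real.sin t :=
        Real.sin_nonneg_of_nonneg_of_le_pi ht (by linarith [Real.pi_gt_three])
      linarith
    · linarith [Real.neg_one_le_sin t]
  · rcases eq_or_lt_of_le ht with h | h
    · simp [← h]
    · exact (Real.sin_lt h).le

lemma sinSum_eq_abel (a p : ℕ) (x : ℝ) :
    ∑ m ∈ Icc (a+1) p, Real.sin ((m:ℝ) * x) / m
      = ∑ m ∈ Icc (a+1) p, (sinPart m x - sinPart (m-1) x) / (m:ℝ) := by
  apply Finset.sum_congr rfl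
  intro m hm
  have hm1 : 1 ≤ m := by simp at hm; omega
  obtain ⟨m', rfl⟩ : ∃ m', m = m' + 1 := ⟨m-1, by omega⟩
  rw [Nat.add_sub_cancel, sinPart_succ]
  push_cast
  ring

lemma head_bound {x : ℝ} (hx : 0 < x) (a b : ℕ) :
    |∑ m ∈ Icc (a+1) b, Real.sin ((m:ℝ) * x) / m| ≤ (b:ℝ) * x := by
  calc |∑ m ∈ Icc (a+1) b, Real.sin ((m:ℝ) * x) / m|
      ≤ ∑ m ∈ Icc (a+1) b, |Real.sin ((m:ℝ) * x) / m| := Finset.abs_sum_le_sum_abs _ _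
  _ ≤ ∑ m ∈ Icc (a+1) b, x := by
      apply Finset.sum_le_sum
      intro m hm
      have hm1 : 1 ≤ m := by simp at hm; omega
      have hmr : (1:ℝ) ≤ (m:ℝ) := by exact_mod_cast hm1
      rw [abs_div, abs_of_pos (by linarith : (0:ℝ) < (m:ℝ)), div_le_iff₀ (by linarith)]
      calc |Real.sin ((m:ℝ)*x)| ≤ (m:ℝ)*x := abs_sin_le (by positivity)
      _ ≤ x * (m:ℝ) := by ring_nf; exact le_refl _
  _ = (Icc (a+1) b).card * x := by rw [Finset.sum_const, nsmul_eq_mul]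
  _ ≤ (b:ℝ) * x := by
      apply mul_le_mul_of_nonneg_right _ hx.le
      have : (Icc (a+1) b).card ≤ b := by
        rw [Nat.card_Icc]; omega
      exact_mod_cast this

lemma sinSum_bound_core {x : ℝ} (hx : 0 < x) (hx2 : x ≤ π) (p : ℕ) :
    |sinSum p x| ≤ 1 + 2 * π := by
  have hπ := Real.pi_pos
  set N := ⌊1/x⌋₊ with hN
  have hNx : (N:ℝ) * x ≤ 1 := by
    have h1 : (N:ℝ) ≤ 1/x := Nat.floor_le (by positivity)
    calc (N:ℝ) * x ≤ (1/x) * x := mul_le_mul_of_nonneg_right h1 hx.le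
    _ = 1 := by field_simp
  have hxN : 1/((N:ℝ)+1) ≤ x := by
    have h2 : 1/x < (N:ℝ)+1 := by
      have := Nat.lt_floor_add_one (1/x)
      push_cast at this ⊢; linarith
    rw [div_le_iff₀ (by positivity)]
    rw [div_lt_iff₀ hx] at h2
    linarith
  rcases le_or_gt p N with hpN | hpN
  · -- p ≤ N : whole sum is a "head"
    have : sinSum p x = ∑ m ∈ Icc (0+1) p, Real.sin ((m:ℝ) * x) / m := by
      unfold sinSum; rfl
    rw [this]
    calc |∑ m ∈ Icc (0+1) p, Real.sin ((m:ℝ) * x) / m| ≤ (p:ℝ) * x := head_bound hx 0 p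
    _ ≤ (N:ℝ) * x := by
        apply mul_le_mul_of_nonneg_right _ hx.le
        exact_mod_cast hpN
    _ ≤ 1 := hNx
    _ ≤ 1 + 2*π := by linarith
  · -- p > N : split
    have hsplit : sinSum p x
        = (∑ m ∈ Icc (0+1) N, Real.sin ((m:ℝ) * x) / m)
          + ∑ m ∈ Icc (N+1) p, Real.sin ((m:ℝ) * x) / m := by
      unfold sinSum
      rw [show Icc 1 p = Ioc 0 p by rw [← Finset.Icc_add_one_left_eq_Ioc]; rfl, show Icc (0+1) N = Ioc 0 N by rw [← Finset.Icc_add_one_left_eq_Ioc],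
        show Icc (N+1) p = Ioc N p by rw [← Finset.Icc_add_one_left_eq_Ioc]]
      rw [← Finset.sum_Ioc_consecutive _ (by omega : 0 ≤ N) (by omega : N ≤ p)]
    have htail : |∑ m ∈ Icc (N+1) p, Real.sin ((m:ℝ) * x) / m| ≤ 2 * π := by
      rw [sinSum_eq_abel]
      have hb := abel_bound (fun n => sinPart n x) (π/x)
        (fun n => sinPart_bound hx hx2 n) N p
      calc |∑ m ∈ Icc (N+1) p, (sinPart m x - sinPart (m-1) x) / (m:ℝ)|
          ≤ 2 * (π/x) / ((N:ℝ)+1) := hb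
      _ = 2 * π * (1/x) * (1/((N:ℝ)+1)) := by ring
      _ ≤ 2 * π * (1/x) * x := by
          apply mul_le_mul_of_nonneg_left hxN (by positivity)
      _ = 2 * π := by field_simp
    have hhead : |∑ m ∈ Icc (0+1) N, Real.sin ((m:ℝ) * x) / m| ≤ 1 :=
      le_trans (head_bound hx 0 N) hNx
    rw [hsplit]
    calc |_| ≤ |∑ m ∈ Icc (0+1) N, Real.sin ((m:ℝ) * x) / m|
        + |∑ m ∈ Icc (N+1) p, Real.sin ((m:ℝ) * x) / m| := abs_add_le _ _
    _ ≤ 1 + 2*π := add_le_add hhead htail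

lemma sinSum_neg (p : ℕ) (x : ℝ) : sinSum p (-x) = - sinSum p x := by
  unfold sinSum
  rw [← Finset.sum_neg_distrib]
  apply Finset.sum_congr rfl
  intro m _
  rw [mul_neg, Real.sin_neg, neg_div]

lemma sinSum_zero (p : ℕ) : sinSum p 0 = 0 := by
  unfold sinSum
  apply Finset.sum_eq_zero
  intro m _
  simp

lemma sinSum_periodic (p : ℕ) (x : ℝ) (k : ℤ) : sinSum p (x - k * (2*π)) = sinSum p x := by
  unfold sinSum
  apply Finset.sum_congr rfl
  intro m _
  congr 1
  conv_rhs => rw [show (m:ℝ)*x = (m:ℝ)*(x - k*(2*π)) + (((m:ℤ)*k : ℤ):ℝ)*(2*π) by push_cast; ring]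
  rw [Real.sin_add_int_mul_two_pi]

lemma sinSum_bound (p : ℕ) (x : ℝ) : |sinSum p x| ≤ 1 + 2 * π := by
  have hπ := Real.pi_pos
  set k : ℤ := round (x / (2*π)) with hk
  set y := x - k * (2*π) with hy
  have hyb : |y| ≤ π := by
    have h1 : |x/(2*π) - k| ≤ 1/2 := abs_sub_round (x/(2*π))
    have h2 : y = (x/(2*π) - k) * (2*π) := by rw [hy]; field_simp
    rw [h2, abs_mul, abs_of_pos (by positivity : (0:ℝ) < 2*π)]
    nlinarith [h1]
  have hxy : sinSum p x = sinSum p y := (sinSum_periodic p x k).symm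
  rw [hxy]
  rcases lt_trichotomy y 0 with h | h | h
  · rw [show y = -(-y) by ring, sinSum_neg, abs_neg]
    exact sinSum_bound_core (by linarith) (by rw [abs_le] at hyb; linarith) p
  · rw [h, sinSum_zero]; simp; positivity
  · exact sinSum_bound_core h (by rw [abs_le] at hyb; linarith) p


lemma T_eq (p q : ℕ) (x : ℝ) : T p q x = 2 * Real.sin ((q:ℝ)*x) * sinSum p x := by
  unfold T sinSum
  rw [← Finset.sum_sub_distrib, Finset.mul_sum]
  apply Finset.sum_congr rfl
  intro m _
  rw [div_sub_div_same]
  rw [Real.cos_sub_cos,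
    show (((q:ℝ)-(m:ℝ))*x + ((q:ℝ)+(m:ℝ))*x)/2 = (q:ℝ)*x by ring,
    show (((q:ℝ)-(m:ℝ))*x - ((q:ℝ)+(m:ℝ))*x)/2 = -((m:ℝ)*x) by ring,
    Real.sin_neg]
  ring

lemma T_bound (p q : ℕ) (x : ℝ) : |T p q x| ≤ 2 * (1 + 2*π) := by
  rw [T_eq, abs_mul, abs_mul]
  calc |2| * |Real.sin ((q:ℝ)*x)| * |sinSum p x| ≤ 2 * 1 * (1 + 2*π) := by
        apply mul_le_mul _ (sinSum_bound p x) (abs_nonneg _) (by positivity)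
        rw [abs_of_pos (by norm_num : (0:ℝ) < 2)]
        exact mul_le_mul_of_nonneg_left (Real.abs_sin_le_one _) (by norm_num)
  _ = 2 * (1 + 2*π) := by ring

lemma integral_cos_freq (r : ℝ) (hr : r ≠ 0) :
    ∫ t in (-π)..π, Real.cos (r*t) = 2 * Real.sin (r*π) / r := by
  have h : ∀ t ∈ Set.uIcc (-π) π, HasDerivAt (fun t => Real.sin (r*t)/r) (Real.cos (r*t)) t := by
    intro t _
    have h1 : HasDerivAt (fun t : ℝ => r*t) r t := by
      simpa using (hasDerivAt_id t).const_mul r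
    have h2 := (Real.hasDerivAt_sin (r*t)).comp t h1
    have h3 := h2.div_const r
    exact h3.congr_deriv (mul_div_cancel_right₀ _ hr)
  rw [intervalIntegral.integral_eq_sub_of_hasDerivAt h
    ((Real.continuous_cos.comp (continuous_const.mul continuous_id)).intervalIntegrable _ _)]
  rw [show r * -π = -(r*π) by ring, Real.sin_neg]
  ring

lemma integral_cos_freq_int (c : ℤ) :
    ∫ t in (-π)..π, Real.cos ((c:ℝ)*t) = if c = 0 then 2*π else 0 := by
  by_cases hc : c = 0
  · subst hc
    simp
    ring
  · rw [if_neg hc, integral_cos_freq _ (by exact_mod_cast hc)]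
    rw [Real.sin_int_mul_pi]
    simp

lemma cosmul (A B t : ℝ) :
    Real.cos (A*t) * Real.cos (B*t) = (Real.cos ((A+B)*t) + Real.cos ((A-B)*t))/2 := by
  rw [show (A+B)*t = A*t + B*t by ring, show (A-B)*t = A*t - B*t by ring,
    Real.cos_add, Real.cos_sub]
  ring

lemma orth (j n : ℕ) : (∫ t in (-π)..π, Real.cos ((j:ℝ)*t) * Real.cos ((n:ℝ)*t))
    = if j = n then (if j = 0 then 2*π else π) else 0 := by
  have hint : ∀ r : ℝ, IntervalIntegrable (fun t => Real.cos (r*t)) MeasureTheory.volume (-π) π :=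
    fun r => (Real.continuous_cos.comp (continuous_const.mul continuous_id)).intervalIntegrable _ _
  have e : (∫ t in (-π)..π, Real.cos ((j:ℝ)*t) * Real.cos ((n:ℝ)*t))
      = ((∫ t in (-π)..π, Real.cos (((j:ℝ)+(n:ℝ))*t))
          + ∫ t in (-π)..π, Real.cos (((j:ℝ)-(n:ℝ))*t))/2 := by
    rw [← intervalIntegral.integral_add (hint _) (hint _), ← intervalIntegral.integral_div]
    apply intervalIntegral.integral_congr
    intro t _
    exact cosmul _ _ t
  rw [e]
  rw [show ((j:ℝ)+(n:ℝ)) = (((j:ℤ)+(n:ℤ) : ℤ):ℝ) by push_cast; ring,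
    show ((j:ℝ)-(n:ℝ)) = (((j:ℤ)-(n:ℤ) : ℤ):ℝ) by push_cast; ring,
    integral_cos_freq_int, integral_cos_freq_int]
  by_cases hjn : j = n
  · subst hjn
    by_cases hj : j = 0
    · subst hj; norm_num
    · rw [if_pos (by omega : (j:ℤ) - j = 0), if_neg (by omega : ¬((j:ℤ) + j = 0)),
        if_pos rfl, if_neg hj]
      ring
  · rw [if_neg (by omega : ¬((j:ℤ) - n = 0)), if_neg hjn]
    by_cases h0 : (j:ℤ) + n = 0
    · exfalso; omega
    · rw [if_neg h0]; norm_num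


noncomputable def coefT (p q n : ℕ) : ℝ :=
  (∑ m ∈ Icc 1 p, if q - m = n then 1/(m:ℝ) else 0)
    - ∑ m ∈ Icc 1 p, if q + m = n then 1/(m:ℝ) else 0

lemma T_continuous (p q : ℕ) : Continuous (T p q) := by
  unfold T
  apply Continuous.sub <;>
  · apply continuous_finset_sum
    intro m _
    exact (Real.continuous_cos.comp (continuous_const.mul continuous_id)).div_const _

lemma int_T (p q n : ℕ) (hpq : p < q) :
    (∫ t in (-π)..π, T p q t * Real.cos ((n:ℝ)*t)) = π * coefT p q n := by
  have hc : ∀ j : ℕ, Continuous (fun t => Real.cos ((j:ℝ)*t) * Real.cos ((n:ℝ)*t)) := by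
    intro j
    exact ((Real.continuous_cos.comp (continuous_const.mul continuous_id)).mul
      (Real.continuous_cos.comp (continuous_const.mul continuous_id)))
  have expand : ∀ t, T p q t * Real.cos ((n:ℝ)*t)
      = (∑ m ∈ Icc 1 p, (1/(m:ℝ)) * (Real.cos (((q-m:ℕ):ℝ)*t) * Real.cos ((n:ℝ)*t)))
        - (∑ m ∈ Icc 1 p, (1/(m:ℝ)) * (Real.cos (((q+m:ℕ):ℝ)*t) * Real.cos ((n:ℝ)*t))) := by
    intro t
    unfold T
    rw [sub_mul, Finset.sum_mul, Finset.sum_mul]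
    congr 1
    · apply Finset.sum_congr rfl
      intro m hm
      have hm1 : m ≤ q := by simp at hm; omega
      rw [Nat.cast_sub hm1]
      ring
    · apply Finset.sum_congr rfl
      intro m _
      push_cast
      ring
  rw [intervalIntegral.integral_congr (fun t _ => expand t)]
  rw [intervalIntegral.integral_sub, intervalIntegral.integral_finset_sum,
    intervalIntegral.integral_finset_sum]
  · unfold coefT
    rw [mul_sub, Finset.mul_sum, Finset.mul_sum]
    congr 1
    · apply Finset.sum_congr rfl
      intro m hm
      have hm1 : 1 ≤ m ∧ m ≤ p := by simpa using hm
      rw [intervalIntegral.integral_const_mul, orth]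
      have hne : q - m ≠ 0 := by omega
      by_cases h : q - m = n
      · rw [if_pos h, if_neg hne, if_pos h]; ring
      · rw [if_neg h, if_neg h]; ring
    · apply Finset.sum_congr rfl
      intro m hm
      have hm1 : 1 ≤ m ∧ m ≤ p := by simpa using hm
      rw [intervalIntegral.integral_const_mul, orth]
      have hne : q + m ≠ 0 := by omega
      by_cases h : q + m = n
      · rw [if_pos h, if_neg hne, if_pos h]; ring
      · rw [if_neg h, if_neg h]; ring
  · intro m _
    exact (continuous_const.mul (hc _)).intervalIntegrable _ _
  · intro m _
    exact (continuous_const.mul (hc _)).intervalIntegrable _ _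
  · apply (continuous_finset_sum _ _).intervalIntegrable
    intro m _
    exact continuous_const.mul (hc _)
  · apply (continuous_finset_sum _ _).intervalIntegrable
    intro m _
    exact continuous_const.mul (hc _)
lemma fourierA_f (p q : ℕ → ℕ) (a : ℕ → ℝ)
    (hpq : ∀ k, 1 < p k ∧ p k < q k) (hsum : Summable a)
    (f : ℝ → ℝ) (hf : ∀ x, f x = ∑' k, a k * T (p k) (q k) x) (n : ℕ) :
    fourierA f n = ∑' k, a k * coefT (p k) (q k) n := by
  have hπ := Real.pi_pos
  set Cb : ℝ := 2 * (1 + 2*π) with hCb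
  have hCbpos : 0 < Cb := by positivity
  set μ := volume.restrict (Set.Ioc (-π) π) with hμ
  set F : ℕ → ℝ → ℝ := fun k t => a k * (T (p k) (q k) t * Real.cos ((n:ℝ)*t)) with hF
  have hFc : ∀ k, Continuous (F k) := by
    intro k
    exact continuous_const.mul ((T_continuous _ _).mul
      (Real.continuous_cos.comp (continuous_const.mul continuous_id)))
  have hFi : ∀ k, Integrable (F k) μ := fun k => (hFc k).integrableOn_Ioc
  have hFnorm : ∀ k t, ‖F k t‖ ≤ |a k| * Cb := by
    intro k t
    rw [hF]
    simp only [Real.norm_eq_abs, abs_mul]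
    apply mul_le_mul_of_nonneg_left _ (abs_nonneg _)
    calc |T (p k) (q k) t| * |Real.cos ((n:ℝ)*t)| ≤ Cb * 1 := by
          apply mul_le_mul (T_bound _ _ _) (Real.abs_cos_le_one _) (abs_nonneg _) hCbpos.le
    _ = Cb := by ring
  have hμuniv : (μ Set.univ).toReal = 2*π := by
    rw [hμ, Measure.restrict_apply_univ, Real.volume_Ioc]
    rw [ENNReal.toReal_ofReal (by linarith)]
    ring
  have hIntBound : ∀ k, (∫ t, ‖F k t‖ ∂μ) ≤ (2*π*Cb) * |a k| := by
    intro k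
    calc (∫ t, ‖F k t‖ ∂μ) ≤ ∫ _, |a k| * Cb ∂μ :=
          integral_mono ((hFi k).norm) (integrable_const _) (hFnorm k)
    _ = (μ Set.univ).toReal * (|a k| * Cb) := by rw [integral_const]; simp [smul_eq_mul, Measure.real]
    _ = (2*π*Cb) * |a k| := by rw [hμuniv]; ring
  have hSumInt : Summable (fun k => ∫ t, ‖F k t‖ ∂μ) := by
    apply Summable.of_nonneg_of_le (fun k => integral_nonneg (fun t => norm_nonneg _)) hIntBound
    exact (hsum.abs.mul_left _)
  have hHasSum := MeasureTheory.hasSum_integral_of_summable_integral_norm hFi hSumInt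
  have htsumF : ∀ t, (∑' k, F k t) = f t * Real.cos ((n:ℝ)*t) := by
    intro t
    rw [hf t, ← tsum_mul_right]
    apply tsum_congr
    intro k
    rw [hF]
    ring
  have hIntF : ∀ k, (∫ t, F k t ∂μ) = a k * (π * coefT (p k) (q k) n) := by
    intro k
    have : (∫ t, F k t ∂μ) = ∫ t in (-π)..π, F k t := by
      rw [intervalIntegral.integral_of_le (by linarith)]
    rw [this, hF]
    simp only
    rw [intervalIntegral.integral_const_mul, int_T _ _ _ (hpq k).2]
  have key : (∫ t, f t * Real.cos ((n:ℝ)*t) ∂μ) = ∑' k, a k * (π * coefT (p k) (q k) n) := by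
    have h1 : (∑' k, a k * (π * coefT (p k) (q k) n)) = ∑' k, ∫ t, F k t ∂μ :=
      tsum_congr (fun k => (hIntF k).symm)
    rw [h1, hHasSum.tsum_eq]
    exact (integral_congr_ae (Filter.EventuallyEq.of_eq (funext htsumF))).symm
  have hiv : fourierA f n = (1/π) * ∫ t, f t * Real.cos ((n:ℝ)*t) ∂μ := by
    unfold fourierA
    congr 1
    exact intervalIntegral.integral_of_le (by linarith)
  rw [hiv, key, ← tsum_mul_left]
  apply tsum_congr
  intro k
  field_simp
-- harmonic sum over Icc
lemma harmonic_Icc (n : ℕ) : ∑ m ∈ Icc 1 n, (1:ℝ)/(m:ℝ) = (harmonic n : ℝ) := by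
  induction n with
  | zero => simp
  | succ n ih =>
    rw [Finset.sum_Icc_succ_top (by omega), ih, harmonic_succ]
    push_cast
    ring

lemma log_le_harmonic_sum (n : ℕ) : Real.log n ≤ ∑ m ∈ Icc 1 n, (1:ℝ)/(m:ℝ) := by
  rw [harmonic_Icc]
  calc Real.log n ≤ Real.log (n+1) := by
        rcases Nat.eq_zero_or_pos n with h | h
        · subst h; simp
        · apply Real.log_le_log (by exact_mod_cast h)
          push_cast; linarith
  _ ≤ (harmonic n : ℝ) := by exact_mod_cast log_add_one_le_harmonic n

/-- The Fourier series of `f` diverges at `x = 0`: the sequence of Fourier partial sums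
`(S_N(f)(0))` has no limit as `N → ∞`. -/
theorem stmt_1 (p q : ℕ → ℕ) (a : ℕ → ℝ)
    (hpq : ∀ k, 1 < p k ∧ p k < q k)
    (hsep : ∀ k, q k + p k < q (k + 1) - p (k + 1))
    (hapos : ∀ k, 0 < a k)
    (hsum : Summable a)
    (hliminf : 0 < Filter.liminf (fun k => a k * Real.log (p k)) Filter.atTop)
    (f : ℝ → ℝ) (hf : ∀ x, f x = ∑' k, a k * T (p k) (q k) x) :
    ¬ ∃ L : ℝ, Filter.Tendsto (fun N => fourierPartialSum f N 0) Filter.atTop (nhds L) := by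
  rintro ⟨L, hL⟩
  -- block separation
  have hblocks : ∀ k l, k < l → q k + p k < q l - p l := by
    intro k l hkl
    induction l with
    | zero => omega
    | succ l ih =>
      rcases Nat.lt_or_ge k l with h | h
      · have h1 := ih h
        have h2 := hsep l
        have h3 := (hpq l).1
        have h4 := (hpq l).2
        have h5 := (hpq (l+1)).2
        omega
      · have : k = l := by omega
        subst this
        exact hsep k
  -- coefficient of f at frequencies in the K-th lower block
  have hcoef : ∀ K n, q K - p K ≤ n → n ≤ q K - 1 →
      fourierA f n = a K * (1/((q K - n : ℕ) : ℝ)) := by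
    intro K n h1 h2
    rw [fourierA_f p q a hpq hsum f hf n]
    have hK2 := (hpq K).2
    have hK1 := (hpq K).1
    rw [tsum_eq_single K]
    · -- coefT at K equals 1/(q K - n)
      unfold coefT
      congr 1
      have hm0 : q K - n ∈ Icc 1 (p K) := by simp; omega
      rw [show (∑ m ∈ Icc 1 (p K), if q K - m = n then 1/(m:ℝ) else 0)
            = ∑ m ∈ Icc 1 (p K), if m = q K - n then 1/(m:ℝ) else 0 from
          Finset.sum_congr rfl (fun m hm => by
            simp at hm
            congr 1
            simp only [eq_iff_iff]
            omega)]
      rw [Finset.sum_ite_eq' (Icc 1 (p K)) (q K - n) (fun m => 1/(m:ℝ)), if_pos hm0]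
      have : ∑ m ∈ Icc 1 (p K), (if q K + m = n then 1/(m:ℝ) else 0) = 0 := by
        apply Finset.sum_eq_zero
        intro m hm
        simp at hm
        rw [if_neg (by omega)]
      rw [this]
      ring
    · -- other blocks contribute 0
      intro k hk
      have hz : coefT (p k) (q k) n = 0 := by
        unfold coefT
        have hk1 := (hpq k).1
        have hk2 := (hpq k).2
        rcases Nat.lt_or_ge k K with hlt | hge
        · have hb := hblocks k K hlt
          have h1' : ∑ m ∈ Icc 1 (p k), (if q k - m = n then 1/(m:ℝ) else 0) = 0 := by
            apply Finset.sum_eq_zero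
            intro m hm
            simp at hm
            rw [if_neg (by omega)]
          have h2' : ∑ m ∈ Icc 1 (p k), (if q k + m = n then 1/(m:ℝ) else 0) = 0 := by
            apply Finset.sum_eq_zero
            intro m hm
            simp at hm
            rw [if_neg (by omega)]
          rw [h1', h2']; ring
        · have hgt : K < k := by omega
          have hb := hblocks K k hgt
          have h1' : ∑ m ∈ Icc 1 (p k), (if q k - m = n then 1/(m:ℝ) else 0) = 0 := by
            apply Finset.sum_eq_zero
            intro m hm
            simp at hm
            rw [if_neg (by omega)]
          have h2' : ∑ m ∈ Icc 1 (p k), (if q k + m = n then 1/(m:ℝ) else 0) = 0 := by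
            apply Finset.sum_eq_zero
            intro m hm
            simp at hm
            rw [if_neg (by omega)]
          rw [h1', h2']; ring
      rw [hz]; ring
  -- partial sums at 0
  have hps : ∀ N, fourierPartialSum f N 0 = fourierA f 0 / 2 + ∑ n ∈ Icc 1 N, fourierA f n := by
    intro N
    unfold fourierPartialSum
    congr 1
    apply Finset.sum_congr rfl
    intro n _
    simp
  -- the key difference
  have hdiff : ∀ K, fourierPartialSum f (q K - 1) 0 - fourierPartialSum f (q K - p K - 1) 0
      = a K * ∑ m ∈ Icc 1 (p K), (1:ℝ)/(m:ℝ) := by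
    intro K
    have hK1 := (hpq K).1
    have hK2 := (hpq K).2
    rw [hps, hps]
    have hsplit : ∑ n ∈ Icc 1 (q K - 1), fourierA f n
        = (∑ n ∈ Icc 1 (q K - p K - 1), fourierA f n)
          + ∑ n ∈ Ioc (q K - p K - 1) (q K - 1), fourierA f n := by
      rw [show Icc 1 (q K - 1) = Ioc 0 (q K - 1) by rw [← Finset.Icc_add_one_left_eq_Ioc]; rfl,
        show Icc 1 (q K - p K - 1) = Ioc 0 (q K - p K - 1) by rw [← Finset.Icc_add_one_left_eq_Ioc]; rfl]
      rw [← Finset.sum_Ioc_consecutive _ (by omega : 0 ≤ q K - p K - 1)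
        (by omega : q K - p K - 1 ≤ q K - 1)]
    rw [hsplit]
    have hIoc : Ioc (q K - p K - 1) (q K - 1) = Icc (q K - p K) (q K - 1) := by
      rw [← Finset.Icc_add_one_left_eq_Ioc]
      congr 1
      omega
    rw [hIoc]
    have hval : ∑ n ∈ Icc (q K - p K) (q K - 1), fourierA f n
        = a K * ∑ m ∈ Icc 1 (p K), (1:ℝ)/(m:ℝ) := by
      rw [Finset.mul_sum]
      refine Finset.sum_nbij' (fun n => q K - n) (fun m => q K - m) ?_ ?_ ?_ ?_ ?_
      · intro n hn; simp only [Finset.mem_Icc] at hn ⊢; omega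
      · intro m hm; simp only [Finset.mem_Icc] at hm ⊢; omega
      · intro n hn; simp only [Finset.mem_Icc] at hn; show q K - (q K - n) = n; omega
      · intro m hm; simp only [Finset.mem_Icc] at hm; show q K - (q K - m) = m; omega
      · intro n hn
        simp only [Finset.mem_Icc] at hn
        show fourierA f n = a K * (1/((q K - n : ℕ):ℝ))
        exact hcoef K n (by omega) (by omega)
    rw [hval]
    ring
  -- lower bound for the difference, eventually
  have hlow : ∀ K, a K * Real.log (p K) ≤ a K * ∑ m ∈ Icc 1 (p K), (1:ℝ)/(m:ℝ) := by
    intro K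
    exact mul_le_mul_of_nonneg_left (log_le_harmonic_sum (p K)) (hapos K).le
  -- get c > 0 with eventual bound
  obtain ⟨c, hc, hev⟩ : ∃ c : ℝ, 0 < c ∧ ∀ᶠ k in atTop, c ≤ a k * Real.log (p k) := by
    set Lm := Filter.liminf (fun k => a k * Real.log (p k)) Filter.atTop with hLm
    have hbdd : Filter.IsBoundedUnder (· ≥ ·) Filter.atTop
        (fun k => a k * Real.log (p k)) := by
      apply Filter.isBoundedUnder_of
      refine ⟨0, fun k => ?_⟩
      have h2 : (0:ℝ) ≤ Real.log (p k) := by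
        apply Real.log_nonneg
        have := (hpq k).1
        exact_mod_cast Nat.one_le_cast.mpr (by omega)
      exact mul_nonneg (hapos k).le h2
    refine ⟨Lm/2, by linarith [hliminf], ?_⟩
    have := Filter.eventually_lt_of_lt_liminf (show Lm/2 < Lm by linarith [hliminf]) hbdd
    filter_upwards [this] with k hk using hk.le
  -- growth of blocks
  have hgrow : ∀ k, k ≤ q k - p k := by
    intro k
    induction k with
    | zero => omega
    | succ k ih =>
      have := hsep k
      have := (hpq k).1
      have := (hpq (k+1)).2
      omega
  -- two subsequence limits
  have ht1 : Filter.Tendsto (fun K => q K - 1) Filter.atTop Filter.atTop := by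
    apply Filter.tendsto_atTop_mono (fun K => by have := hgrow K; have := (hpq K).1; have := (hpq K).2; omega : ∀ K, K ≤ q K - 1)
    exact Filter.tendsto_id
  have ht2 : Filter.Tendsto (fun K => q K - p K - 1) Filter.atTop Filter.atTop := by
    have hge : ∀ K, K - 1 ≤ q K - p K - 1 := fun K => by have := hgrow K; omega
    apply Filter.tendsto_atTop_mono hge
    exact Filter.tendsto_sub_atTop_nat 1
  have h1 := hL.comp ht1
  have h2 := hL.comp ht2
  have h0 : Filter.Tendsto (fun K => fourierPartialSum f (q K - 1) 0
      - fourierPartialSum f (q K - p K - 1) 0) Filter.atTop (nhds 0) := by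
    have := h1.sub h2
    rwa [sub_self] at this
  have hevc : ∀ᶠ K in atTop, c ≤ fourierPartialSum f (q K - 1) 0
      - fourierPartialSum f (q K - p K - 1) 0 := by
    filter_upwards [hev] with K hK
    rw [hdiff K]
    exact le_trans hK (hlow K)
  have : c ≤ 0 := ge_of_tendsto h0 hevc
  linarith
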